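/- There is an L_OR formula ψ(x) such that PA ⊢ ∀x ψ(x), but no inductive formula φ(x) satisfies PA⁻ ⊢ ∀x(φ(x) → ψ(x)). -/

import Mathlib

open FirstOrder Language

/-! ### The language `L_OR = {0, 1, +, ×, <}` of ordered rings -/

/-- Function symbols of the language of ordered rings. -/
inductive LorFunc : ℕ → Type
  | zero : LorFunc 0
  | one : LorFunc 0
  | add : LorFunc 2
  | mul : LorFunc 2

/-- Relation symbols of the language of ordered rings: just `<`. -/
inductive LorRel : ℕ → Type
  | lt : LorRel 2

/-- The first-order language of ordered rings. -/
def Lor : Language := ⟨LorFunc, LorRel⟩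

/-- The term `0`. -/
def zeroT {α : Type} : Lor.Term α := Constants.term LorFunc.zero

/-- The term `1`. -/
def oneT {α : Type} : Lor.Term α := Constants.term LorFunc.one

/-- Addition of terms. -/
def addT {α : Type} (t u : Lor.Term α) : Lor.Term α := Functions.apply₂ LorFunc.add t u

/-- Multiplication of terms. -/
def mulT {α : Type} (t u : Lor.Term α) : Lor.Term α := Functions.apply₂ LorFunc.mul t u

/-- The term `2`, an abbreviation for `1 + 1`. -/
def twoT {α : Type} : Lor.Term α := addT oneT oneT

/-- The numeral `k`, i.e. the closed term `(⋯((0+1)+1)+⋯+1)` with `k` ones. -/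
def numT {α : Type} : ℕ → Lor.Term α
  | 0 => zeroT
  | n + 1 => addT (numT n) oneT

/-- The bounded formula `t < u`. -/
def ltBF {α : Type} {n : ℕ} (t u : Lor.Term (α ⊕ Fin n)) : Lor.BoundedFormula α n :=
  Relations.boundedFormula₂ LorRel.lt t u

/-- The formula `t < u`. -/
def ltFml {α : Type} (t u : Lor.Term α) : Lor.Formula α :=
  Relations.formula₂ LorRel.lt t u

/-- The formula `t ≤ u`, an abbreviation for `t < u ∨ t = u`. -/
def leFml {α : Type} (t u : Lor.Term α) : Lor.Formula α :=
  ltFml t u ⊔ Term.equal t u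

/-! ### The base theory `PA⁻` -/

/-- `PA⁻`, the theory of non-negative parts of discretely ordered rings. -/
def PAminus : Lor.Theory :=
  { -- (P1) associativity of +
    ∀' ∀' ∀' (addT (addT &0 &1) &2 =' addT &0 (addT &1 &2)),
    -- (P2) commutativity of +
    ∀' ∀' (addT &0 &1 =' addT &1 &0),
    -- (P3) associativity of ×
    ∀' ∀' ∀' (mulT (mulT &0 &1) &2 =' mulT &0 (mulT &1 &2)),
    -- (P4) commutativity of ×
    ∀' ∀' (mulT &0 &1 =' mulT &1 &0),
    -- (P5) distributivity
    ∀' ∀' ∀' (mulT &0 (addT &1 &2) =' addT (mulT &0 &1) (mulT &0 &2)),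
    -- (P6) x + 0 = x
    ∀' (addT &0 zeroT =' &0),
    -- (P7) x × 0 = 0
    ∀' (mulT &0 zeroT =' zeroT),
    -- (P8) x × 1 = x
    ∀' (mulT &0 oneT =' &0),
    -- (P9) transitivity of <
    ∀' ∀' ∀' (ltBF &0 &1 ⊓ ltBF &1 &2 ⟹ ltBF &0 &2),
    -- (P10) irreflexivity of <
    ∀' ∼(ltBF &0 &0),
    -- (P11) linearity of <
    ∀' ∀' (ltBF &0 &1 ⊔ &0 =' &1 ⊔ ltBF &1 &0),
    -- (P12) x < y → x + z < y + z
    ∀' ∀' ∀' (ltBF &0 &1 ⟹ ltBF (addT &0 &2) (addT &1 &2)),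
    -- (P13) z ≠ 0 ∧ x < y → x × z < y × z
    ∀' ∀' ∀' (∼(&2 =' zeroT) ⊓ ltBF &0 &1 ⟹ ltBF (mulT &0 &2) (mulT &1 &2)),
    -- (P14) x < y ↔ ∃z ((x + z) + 1 = y)
    ∀' ∀' (ltBF &0 &1 ⇔ ∃' (addT (addT &0 &2) oneT =' &1)),
    -- (P15) 0 < 1 ∧ (x > 0 → x ≥ 1)
    ltBF zeroT oneT ⊓ ∀' (ltBF zeroT &0 ⟹ ltBF oneT &0 ⊔ oneT =' &0),
    -- (P16) x ≥ 0
    ∀' (ltBF zeroT &0 ⊔ zeroT =' &0) }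

/-! ### Formulas `θ(x, z̄)` with a distinguished variable `x` and parameters `z̄`

A formula `θ(x, z̄)` with `m` parameters `z̄` and a distinguished induction
variable `x` is represented as `θ : Lor.Formula (Fin m ⊕ Fin 1)`, where the
`Fin m` component gives the parameters and the `Fin 1` component gives `x`. -/

/-- The distinguished variable `x` as a term. -/
def xT {m : ℕ} : Lor.Term (Fin m ⊕ Fin 1) := Term.var (Sum.inr 0)

/-- `θ(t, z̄)`, where `t` is a term possibly involving `x` and the parameters. -/
def substX {m : ℕ} (θ : Lor.Formula (Fin m ⊕ Fin 1)) (t : Lor.Term (Fin m ⊕ Fin 1)) :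
    Lor.Formula (Fin m ⊕ Fin 1) :=
  θ.subst (Sum.elim (fun i => Term.var (Sum.inl i)) fun _ => t)

/-- `θ(t, z̄)` where `t` is a term in the parameters only. -/
def substP {m : ℕ} (θ : Lor.Formula (Fin m ⊕ Fin 1)) (t : Lor.Term (Fin m)) :
    Lor.Formula (Fin m) :=
  θ.subst (Sum.elim (fun i => Term.var i) fun _ => t)

/-- `∀x θ(x, z̄)`. -/
noncomputable def allX {m : ℕ} (θ : Lor.Formula (Fin m ⊕ Fin 1)) : Lor.Formula (Fin m) :=
  Formula.iAlls (Fin 1) θ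

/-- The universal closure of a formula, as a sentence. -/
noncomputable def closeAll {α : Type} [Finite α] (φ : Lor.Formula α) : Lor.Sentence :=
  Formula.iAlls α (φ.relabel (Sum.inr : α → Empty ⊕ α))

/-- `∀x' < x, θ(x', z̄)`, a formula with free variable `x` (and parameters). -/
noncomputable def allLtX {m : ℕ} (θ : Lor.Formula (Fin m ⊕ Fin 1)) :
    Lor.Formula (Fin m ⊕ Fin 1) :=
  Formula.iAlls (Fin 1)
    (ltFml (Term.var (Sum.inr 0)) (Term.var (Sum.inl (Sum.inr 0))) ⟹
      θ.relabel (Sum.elim (fun i => Sum.inl (Sum.inl i)) fun _ => Sum.inr 0))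

/-- `∀x' ≤ x, θ(x', z̄)`, a formula with free variable `x` (and parameters). -/
noncomputable def allLeX {m : ℕ} (θ : Lor.Formula (Fin m ⊕ Fin 1)) :
    Lor.Formula (Fin m ⊕ Fin 1) :=
  Formula.iAlls (Fin 1)
    (leFml (Term.var (Sum.inr 0)) (Term.var (Sum.inl (Sum.inr 0))) ⟹
      θ.relabel (Sum.elim (fun i => Sum.inl (Sum.inl i)) fun _ => Sum.inr 0))

/-- The conjunction `⋀_{k<j} θ(k, z̄)`. -/
def conjNum {m : ℕ} (θ : Lor.Formula (Fin m ⊕ Fin 1)) : ℕ → Lor.Formula (Fin m)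
  | 0 => ⊤
  | j + 1 => conjNum θ j ⊓ substP θ (numT j)

/-- The conjunction `⋀_{k<j} θ(x+k, z̄)`. -/
def conjShift {m : ℕ} (θ : Lor.Formula (Fin m ⊕ Fin 1)) : ℕ → Lor.Formula (Fin m ⊕ Fin 1)
  | 0 => ⊤
  | j + 1 => conjShift θ j ⊓ substX θ (addT xT (numT j))

/-! ### Induction axioms -/

/-- The induction axiom `I_x θ`:
`∀z̄( θ(0,z̄) ∧ ∀x(θ(x,z̄) → θ(x+1,z̄)) → ∀x θ(x,z̄) )`. -/
noncomputable def indAx {m : ℕ} (θ : Lor.Formula (Fin m ⊕ Fin 1)) : Lor.Sentence :=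
  closeAll ((substP θ zeroT ⊓ allX (θ ⟹ substX θ (addT xT oneT))) ⟹ allX θ)

/-- The `<`-induction axiom `I^<_x θ`:
`∀z̄( ∀y(∀x<y θ(x,z̄) → θ(y,z̄)) → ∀x θ(x,z̄) )`. -/
noncomputable def indLtAx {m : ℕ} (θ : Lor.Formula (Fin m ⊕ Fin 1)) : Lor.Sentence :=
  closeAll (allX (allLtX θ ⟹ θ) ⟹ allX θ)

/-- The `(n+1)`-step induction axiom `I^{(n+1)-step}_x θ`:
`∀z̄( ⋀_{k<n+1} θ(k,z̄) ∧ ∀x(θ(x,z̄) → θ(x+n+1,z̄)) → ∀x θ(x,z̄) )`. -/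
noncomputable def indStepAx {m : ℕ} (n : ℕ) (θ : Lor.Formula (Fin m ⊕ Fin 1)) : Lor.Sentence :=
  closeAll ((conjNum θ (n + 1) ⊓ allX (θ ⟹ substX θ (addT xT (numT (n + 1))))) ⟹ allX θ)

/-- The `(n+1)`-induction axiom `I^{n+1}_x θ`:
`∀z̄( ⋀_{k<n+1} θ(k,z̄) ∧ ∀x(⋀_{k<n+1} θ(x+k,z̄) → θ(x+n+1,z̄)) → ∀x θ(x,z̄) )`. -/
noncomputable def indKAx {m : ℕ} (n : ℕ) (θ : Lor.Formula (Fin m ⊕ Fin 1)) : Lor.Sentence :=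
  closeAll ((conjNum θ (n + 1) ⊓ allX (conjShift θ (n + 1) ⟹ substX θ (addT xT (numT (n + 1))))) ⟹
    allX θ)

/-- The polynomial induction axiom `I^p_x θ`:
`∀z̄( θ(0,z̄) ∧ ∀x(θ(x,z̄) → θ(2x,z̄) ∧ θ(2x+1,z̄)) → ∀x θ(x,z̄) )`, where `2x` is `(1+1)×x`. -/
noncomputable def indPAx {m : ℕ} (θ : Lor.Formula (Fin m ⊕ Fin 1)) : Lor.Sentence :=
  closeAll ((substP θ zeroT ⊓
      allX (θ ⟹ substX θ (mulT twoT xT) ⊓ substX θ (addT (mulT twoT xT) oneT))) ⟹ allX θ)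

/-! ### Theories -/

/-- Peano arithmetic: `PA⁻` plus induction for all `L_OR` formulas. -/
noncomputable def PA : Lor.Theory :=
  PAminus ∪ {σ | ∃ (m : ℕ) (θ : Lor.Formula (Fin m ⊕ Fin 1)), σ = indAx θ}

/-- `IOpen`: `PA⁻` plus induction for all quantifier-free `L_OR` formulas. -/
noncomputable def IOpen : Lor.Theory :=
  PAminus ∪ {σ | ∃ (m : ℕ) (θ : Lor.Formula (Fin m ⊕ Fin 1)), θ.IsQF ∧ σ = indAx θ}

/-! ### Notions of inductiveness

A formula `φ(x)` with exactly one free variable `x` is represented as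
`φ : Lor.Formula (Fin 0 ⊕ Fin 1)` (no parameters). -/

/-- Formulas `φ(x)` with exactly one free variable `x`. -/
abbrev OneVarFormula : Type := Lor.Formula (Fin 0 ⊕ Fin 1)

/-- The sentence `∀x φ(x)`. -/
noncomputable def allS (φ : OneVarFormula) : Lor.Sentence := closeAll (allX φ)

/-- `φ(x)` is inductive: `PA⁻ ⊢ φ(0)` and `PA⁻ ⊢ ∀x(φ(x) → φ(x+1))`. -/
noncomputable def IsInductive (φ : OneVarFormula) : Prop :=
  PAminus ⊨ᵇ closeAll (substP φ zeroT) ∧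
    PAminus ⊨ᵇ closeAll (allX (φ ⟹ substX φ (addT xT oneT)))

/-- `φ(x)` is `<`-inductive: `PA⁻ ⊢ ∀y(∀x<y φ(x) → φ(y))`. -/
noncomputable def IsLtInductive (φ : OneVarFormula) : Prop :=
  PAminus ⊨ᵇ closeAll (allX (allLtX φ ⟹ φ))

/-- `φ(x)` is `(n+1)`-step inductive:
`PA⁻ ⊢ ⋀_{k<n+1} φ(k) ∧ ∀x(φ(x) → φ(x+n+1))`. -/
noncomputable def IsStepInductive (n : ℕ) (φ : OneVarFormula) : Prop :=
  PAminus ⊨ᵇ closeAll (conjNum φ (n + 1) ⊓ allX (φ ⟹ substX φ (addT xT (numT (n + 1)))))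

/-- `φ(x)` is `(n+1)`-inductive:
`PA⁻ ⊢ ⋀_{k<n+1} φ(k) ∧ ∀x(⋀_{k<n+1} φ(x+k) → φ(x+n+1))`. -/
noncomputable def IsKInductive (n : ℕ) (φ : OneVarFormula) : Prop :=
  PAminus ⊨ᵇ
    closeAll (conjNum φ (n + 1) ⊓ allX (conjShift φ (n + 1) ⟹ substX φ (addT xT (numT (n + 1)))))

/-- `φ(x)` is p-inductive (polynomially inductive):
`PA⁻ ⊢ φ(0) ∧ ∀x(φ(x) → φ(2x) ∧ φ(2x+1))`. -/
noncomputable def IsPInductive (φ : OneVarFormula) : Prop :=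
  PAminus ⊨ᵇ closeAll (substP φ zeroT ⊓
    allX (φ ⟹ substX φ (mulT twoT xT) ⊓ substX φ (addT (mulT twoT xT) oneT)))

/-! ### Cuts -/

/-- `φ(x)` is a cut: an inductive formula with `PA⁻ ⊢ ∀x∀y(x<y ∧ φ(y) → φ(x))`. -/
noncomputable def IsCut (φ : OneVarFormula) : Prop :=
  IsInductive φ ∧
    PAminus ⊨ᵇ closeAll
      (ltFml (Term.var (Sum.inr 0) : Lor.Term (Fin 0 ⊕ Fin 2)) (Term.var (Sum.inr 1)) ⊓
          φ.relabel (Sum.elim (fun i => Sum.inl i) fun _ => Sum.inr 1) ⟹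
        φ.relabel (Sum.elim (fun i => Sum.inl i) fun _ => Sum.inr 0))

/-- `φ(x)` is an a-cut: a cut with `PA⁻ ⊢ ∀x(φ(x) → φ(x+x))`. -/
noncomputable def IsACut (φ : OneVarFormula) : Prop :=
  IsCut φ ∧ PAminus ⊨ᵇ closeAll (allX (φ ⟹ substX φ (addT xT xT)))

/-- `φ(x)` is an am-cut: an a-cut with `PA⁻ ⊢ ∀x(φ(x) → φ(x×x))`. -/
noncomputable def IsAMCut (φ : OneVarFormula) : Prop :=
  IsACut φ ∧ PAminus ⊨ᵇ closeAll (allX (φ ⟹ substX φ (mulT xT xT)))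

/-! ### Auxiliary development for `stmt4` -/

section Stmt4Aux

open FirstOrder Language Polynomial

variable {M : Type*} [Lor.Structure M]

/-- Interpretation of `0`. -/
def mzero (M : Type*) [Lor.Structure M] : M := Structure.funMap (L := Lor) (M := M) LorFunc.zero default
/-- Interpretation of `1`. -/
def mone (M : Type*) [Lor.Structure M] : M := Structure.funMap (L := Lor) (M := M) LorFunc.one default
/-- Interpretation of `+`. -/
def madd (a b : M) : M := Structure.funMap (L := Lor) (M := M) LorFunc.add ![a, b]
/-- Interpretation of `×`. -/
def mmul (a b : M) : M := Structure.funMap (L := Lor) (M := M) LorFunc.mul ![a, b]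
/-- Interpretation of `<`. -/
def mlt (a b : M) : Prop := Structure.RelMap (L := Lor) (M := M) LorRel.lt ![a, b]

@[simp] lemma realize_zeroT {α : Type} (v : α → M) :
    (zeroT : Lor.Term α).realize v = mzero M := by
  exact Term.realize_constants (L := Lor) (c := LorFunc.zero)

@[simp] lemma realize_oneT {α : Type} (v : α → M) :
    (oneT : Lor.Term α).realize v = mone M := by
  exact Term.realize_constants (L := Lor) (c := LorFunc.one)

@[simp] lemma realize_addT {α : Type} (t u : Lor.Term α) (v : α → M) :
    (addT t u).realize v = madd (t.realize v) (u.realize v) := by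
  exact Term.realize_functions_apply₂ (L := Lor) (f := LorFunc.add)

@[simp] lemma realize_mulT {α : Type} (t u : Lor.Term α) (v : α → M) :
    (mulT t u).realize v = mmul (t.realize v) (u.realize v) := by
  exact Term.realize_functions_apply₂ (L := Lor) (f := LorFunc.mul)

@[simp] lemma realize_ltBF {α : Type} {n : ℕ} (t u : Lor.Term (α ⊕ Fin n))
    (v : α → M) (xs : Fin n → M) :
    (ltBF t u).Realize v xs ↔ mlt (t.realize (Sum.elim v xs)) (u.realize (Sum.elim v xs)) := by
  exact BoundedFormula.realize_rel₂ (L := Lor) (R := LorRel.lt)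

@[simp] lemma realize_ltFml {α : Type} (t u : Lor.Term α) (v : α → M) :
    (ltFml t u).Realize v ↔ mlt (t.realize v) (u.realize v) := by
  exact Formula.realize_rel₂ (L := Lor) (R := LorRel.lt)

lemma realize_closeAll {α : Type} [Finite α] (φ : Lor.Formula α) (v : Empty → M)
    (xs : Fin 0 → M) :
    BoundedFormula.Realize (closeAll φ) v xs ↔ ∀ w : α → M, φ.Realize w := by
  rw [closeAll, BoundedFormula.realize_iAlls]
  simp only [Formula.realize_relabel]
  exact Iff.rfl

lemma realize_allX {m : ℕ} (θ : Lor.Formula (Fin m ⊕ Fin 1)) (v : Fin m → M) :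
    (allX θ).Realize v ↔ ∀ x : M, θ.Realize (Sum.elim v fun _ => x) := by
  rw [allX, Formula.realize_iAlls]
  constructor
  · intro h x; exact h fun _ => x
  · intro h i
    have := h (i 0)
    have hi : (Sum.elim v fun _ : Fin 1 => i 0) = fun a => Sum.elim v i a := by
      funext a; cases a with
      | inl j => rfl
      | inr j => simp [Subsingleton.elim j 0]
    rwa [hi] at this

lemma realize_substP {m : ℕ} (θ : Lor.Formula (Fin m ⊕ Fin 1)) (t : Lor.Term (Fin m))
    (v : Fin m → M) :
    (substP θ t).Realize v ↔ θ.Realize (Sum.elim v fun _ => t.realize v) := by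
  rw [substP, Formula.Realize, BoundedFormula.realize_subst]
  have : (fun a => ((Sum.elim (fun i => (Term.var i : Lor.Term (Fin m)))
      (fun _ : Fin 1 => t)) a).realize v) = Sum.elim v fun _ => t.realize v := by
    funext a; cases a with
    | inl j => rfl
    | inr j => rfl
  rw [this]
  rfl

lemma realize_substX {m : ℕ} (θ : Lor.Formula (Fin m ⊕ Fin 1)) (t : Lor.Term (Fin m ⊕ Fin 1))
    (v : Fin m ⊕ Fin 1 → M) :
    (substX θ t).Realize v ↔
      θ.Realize (Sum.elim (fun i => v (Sum.inl i)) fun _ => t.realize v) := by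
  rw [substX, Formula.Realize, BoundedFormula.realize_subst]
  have : (fun a => ((Sum.elim (fun i => (Term.var (Sum.inl i) : Lor.Term (Fin m ⊕ Fin 1)))
      (fun _ : Fin 1 => t)) a).realize v) =
      Sum.elim (fun i => v (Sum.inl i)) fun _ => t.realize v := by
    funext a; cases a with
    | inl j => rfl
    | inr j => rfl
  rw [this]
  rfl

/-- The formula `ψ(x) := ∀z ∃y (y + y = z ∨ (y + y) + 1 = z)` (ignoring `x`). -/
def psiF : OneVarFormula :=
  ∀' ∃' ((addT (&1) (&1) =' &0) ⊔ (addT (addT (&1) (&1)) oneT =' &0))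

lemma realize_psiF (v : Fin 0 ⊕ Fin 1 → M) :
    psiF.Realize v ↔
      ∀ z : M, ∃ y : M, madd y y = z ∨ madd (madd y y) (mone M) = z := by
  rw [psiF, Formula.Realize]
  simp [BoundedFormula.realize_all, BoundedFormula.realize_ex, Fin.snoc]

/-- The formula `θ(x) := ∃y (y + y = x ∨ (y + y) + 1 = x)`. -/
def thetaEO : Lor.Formula (Fin 0 ⊕ Fin 1) :=
  ∃' ((addT (&0) (&0) =' Term.var (Sum.inl (Sum.inr 0))) ⊔
      (addT (addT (&0) (&0)) oneT =' Term.var (Sum.inl (Sum.inr 0))))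

lemma realize_thetaEO (v : Fin 0 ⊕ Fin 1 → M) :
    thetaEO.Realize v ↔
      ∃ y : M, madd y y = v (Sum.inr 0) ∨ madd (madd y y) (mone M) = v (Sum.inr 0) := by
  rw [thetaEO, Formula.Realize]
  simp [BoundedFormula.realize_ex, Fin.snoc]


/-! #### Leading coefficient lemmas -/

lemma lc_add_nonneg {p q : Polynomial ℤ} (hp : 0 ≤ p.leadingCoeff) (hq : 0 ≤ q.leadingCoeff) :
    0 ≤ (p + q).leadingCoeff := by
  rcases lt_trichotomy (degree p) (degree q) with h | h | h
  · rwa [leadingCoeff_add_of_degree_lt h]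
  · by_cases h0 : p.leadingCoeff + q.leadingCoeff = 0
    · have hp0 : p.leadingCoeff = 0 := by omega
      have hq0 : q.leadingCoeff = 0 := by omega
      rw [leadingCoeff_eq_zero] at hp0 hq0
      simp [hp0, hq0]
    · rw [leadingCoeff_add_of_degree_eq h h0]
      exact add_nonneg hp hq
  · rwa [leadingCoeff_add_of_degree_lt' h]

lemma lc_add_pos {p q : Polynomial ℤ} (hp : 0 < p.leadingCoeff) (hq : 0 < q.leadingCoeff) :
    0 < (p + q).leadingCoeff := by
  rcases lt_trichotomy (degree p) (degree q) with h | h | h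
  · rwa [leadingCoeff_add_of_degree_lt h]
  · rw [leadingCoeff_add_of_degree_eq h (by omega)]
    omega
  · rwa [leadingCoeff_add_of_degree_lt' h]

lemma lc_sub_one_nonneg {p : Polynomial ℤ} (hp : 0 < p.leadingCoeff) :
    0 ≤ (p - 1).leadingCoeff := by
  rcases le_or_gt p.degree 0 with h | h
  · have hc := Polynomial.eq_C_of_degree_le_zero h
    have hlc : p.leadingCoeff = p.coeff 0 := by
      conv_lhs => rw [hc]
      exact Polynomial.leadingCoeff_C _
    rw [hc, ← Polynomial.C_1, ← Polynomial.C_sub, Polynomial.leadingCoeff_C]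
    omega
  · have h1 : ((-1 : Polynomial ℤ)).degree < p.degree := by
      refine lt_of_le_of_lt ?_ h
      rw [degree_neg]
      exact degree_one_le
    rw [sub_eq_add_neg, leadingCoeff_add_of_degree_lt' h1]
    omega

lemma lc_trichotomy {p : Polynomial ℤ} (h : p ≠ 0) :
    0 < p.leadingCoeff ∨ 0 < (-p).leadingCoeff := by
  rw [leadingCoeff_neg]
  have : p.leadingCoeff ≠ 0 := fun h0 => h (leadingCoeff_eq_zero.mp h0)
  omega

/-! #### The model `M0`: the non-negative part of `ℤ[X]` -/

/-- The non-negative part of `ℤ[X]`: polynomials with non-negative leading coefficient. -/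
def M0 : Type := {p : Polynomial ℤ // 0 ≤ p.leadingCoeff}

instance : Nonempty M0 := ⟨⟨0, by simp⟩⟩

noncomputable instance M0struc : Lor.Structure M0 where
  funMap {n} f v :=
    match f with
    | .zero => ⟨0, by simp⟩
    | .one => ⟨1, by simp⟩
    | .add => ⟨(v 0).1 + (v 1).1, lc_add_nonneg (v 0).2 (v 1).2⟩
    | .mul => ⟨(v 0).1 * (v 1).1, by
        rw [leadingCoeff_mul]; exact mul_nonneg (v 0).2 (v 1).2⟩
  RelMap {n} r v :=
    match r with
    | .lt => 0 < ((v 1).1 - (v 0).1).leadingCoeff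

@[simp] lemma M0_zero_val : (mzero M0).1 = 0 := rfl
@[simp] lemma M0_one_val : (mone M0).1 = 1 := rfl
@[simp] lemma M0_add_val (a b : M0) : (madd a b).1 = a.1 + b.1 := rfl
@[simp] lemma M0_mul_val (a b : M0) : (mmul a b).1 = a.1 * b.1 := rfl
lemma M0_lt (a b : M0) : mlt a b ↔ 0 < (b.1 - a.1).leadingCoeff := Iff.rfl
lemma lc_pos_of_ne {c : Polynomial ℤ} (h2 : 0 ≤ c.leadingCoeff) (h0 : c ≠ 0) :
    0 < c.leadingCoeff := by
  have : c.leadingCoeff ≠ 0 := fun h => h0 (leadingCoeff_eq_zero.mp h)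
  omega

lemma lc_one_pos : (0:ℤ) < (1 : Polynomial ℤ).leadingCoeff := by
  rw [Polynomial.leadingCoeff_one]; norm_num

lemma M0_models : M0 ⊨ PAminus := by
  rw [Theory.model_iff]
  intro σ hσ
  rw [PAminus] at hσ
  simp only [Set.mem_insert_iff, Set.mem_singleton_iff] at hσ
  rcases hσ with rfl|rfl|rfl|rfl|rfl|rfl|rfl|rfl|rfl|rfl|rfl|rfl|rfl|rfl|rfl|rfl <;>
    simp only [Sentence.Realize, Formula.Realize, BoundedFormula.realize_all,
      BoundedFormula.realize_imp, BoundedFormula.realize_inf, BoundedFormula.realize_sup,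
      BoundedFormula.realize_not, BoundedFormula.realize_bdEqual, BoundedFormula.realize_iff,
      BoundedFormula.realize_ex, realize_ltBF, realize_addT, realize_mulT, realize_zeroT,
      realize_oneT] <;>
    simp only [Term.realize, Function.comp_apply, Sum.elim_inr, Fin.snoc, Nat.lt_irrefl,
      Fin.val_zero, Fin.val_one, Fin.coe_castLT, dif_pos, dif_neg, Fin.val_two,
      Nat.zero_lt_one, Nat.zero_lt_two, Nat.one_lt_two, dite_true, dite_false, Fin.castLT,
      show ((0 : Fin 3) : ℕ) < 2 by norm_num, show ¬((2 : Fin 3) : ℕ) < 2 by norm_num,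
      show ((1 : Fin 3) : ℕ) < 2 by norm_num, show ((0 : Fin 2) : ℕ) < 1 by norm_num,
      show ¬((1 : Fin 2) : ℕ) < 1 by norm_num, show ¬((0 : Fin 1) : ℕ) < 0 by norm_num, cast_eq]
  -- (P1)
  · exact fun a b c => Subtype.ext (add_assoc a.1 b.1 c.1)
  -- (P2)
  · exact fun a b => Subtype.ext (add_comm a.1 b.1)
  -- (P3)
  · exact fun a b c => Subtype.ext (mul_assoc a.1 b.1 c.1)
  -- (P4)
  · exact fun a b => Subtype.ext (mul_comm a.1 b.1)
  -- (P5)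
  · exact fun a b c => Subtype.ext (mul_add a.1 b.1 c.1)
  -- (P6)
  · exact fun a => Subtype.ext (add_zero a.1)
  -- (P7)
  · exact fun a => Subtype.ext (mul_zero a.1)
  -- (P8)
  · exact fun a => Subtype.ext (mul_one a.1)
  -- (P9)
  · rintro a b c ⟨h1, h2⟩
    rw [M0_lt] at *
    have := lc_add_pos h2 h1
    rwa [sub_add_sub_cancel] at this
  -- (P10)
  · intro a
    rw [M0_lt]
    simp
  -- (P11)
  · intro a b
    rcases eq_or_ne a b with h | h
    · exact Or.inl (Or.inr h)
    · have hne : b.1 - a.1 ≠ 0 := sub_ne_zero.mpr fun he => h (Subtype.ext he.symm)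
      rcases lc_trichotomy hne with hp | hp
      · exact Or.inl (Or.inl ((M0_lt a b).mpr hp))
      · refine Or.inr ((M0_lt b a).mpr ?_)
        rwa [neg_sub] at hp
  -- (P12)
  · intro a b c h
    rw [M0_lt] at *
    simp only [M0_add_val]
    rwa [add_sub_add_right_eq_sub]
  -- (P13)
  · rintro a b c ⟨hc, h⟩
    rw [M0_lt] at *
    have hcv : c.1 ≠ 0 := fun h0 => hc (Subtype.ext h0)
    simp only [M0_mul_val]
    rw [← sub_mul, leadingCoeff_mul]
    exact mul_pos h (lc_pos_of_ne c.2 hcv)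
  -- (P14)
  · intro a b
    rw [M0_lt]
    constructor
    · intro h
      refine ⟨⟨b.1 - a.1 - 1, lc_sub_one_nonneg h⟩, Subtype.ext ?_⟩
      show a.1 + (b.1 - a.1 - 1) + 1 = b.1
      ring
    · rintro ⟨c, hc⟩
      have hv := congrArg Subtype.val hc
      simp only [M0_add_val, M0_one_val] at hv
      have hba : b.1 - a.1 = c.1 + 1 := by rw [← hv]; ring
      rw [hba]
      rcases eq_or_ne c.1 0 with h0 | h0
      · rw [h0, zero_add]
        exact lc_one_pos
      · exact lc_add_pos (lc_pos_of_ne c.2 h0) lc_one_pos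
  -- (P15)
  · constructor
    · rw [M0_lt]
      simp only [M0_zero_val, M0_one_val, sub_zero]
      exact lc_one_pos
    · intro a h
      rw [M0_lt] at h
      simp only [M0_zero_val, sub_zero] at h
      rcases eq_or_ne (a.1 - 1) 0 with h0 | h0
      · exact Or.inr (Subtype.ext (sub_eq_zero.mp h0).symm)
      · refine Or.inl ((M0_lt _ _).mpr ?_)
        simp only [M0_one_val]
        exact lc_pos_of_ne (lc_sub_one_nonneg h) h0
  -- (P16)
  · intro a
    rcases eq_or_ne a.1 0 with h0 | h0
    · exact Or.inr (Subtype.ext h0.symm)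
    · refine Or.inl ((M0_lt _ _).mpr ?_)
      simp only [M0_zero_val, sub_zero]
      exact lc_pos_of_ne a.2 h0
/-- The element `X` of `M0`. -/
noncomputable def Xel : M0 := ⟨Polynomial.X, by simp⟩

lemma not_evenodd :
    ¬ (∃ y : M0, madd y y = Xel ∨ madd (madd y y) (mone M0) = Xel) := by
  rintro ⟨y, h | h⟩ <;>
  · have h1 := congrArg (fun z : M0 => z.1.coeff 1) h
    simp only [M0_add_val, M0_one_val, Polynomial.coeff_add, Xel, Polynomial.coeff_X_one,
      Polynomial.coeff_one] at h1
    omega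

/-! #### Consequences of `PA` in an arbitrary model -/

section PAModel

variable (M : Type*) [Lor.Structure M] [M ⊨ PA]

lemma PA_add_assoc : ∀ a b c : M, madd (madd a b) c = madd a (madd b c) := by
  have h := Theory.realize_sentence_of_mem (M := M) PA
    (Set.mem_union_left _ (show (∀' ∀' ∀' (addT (addT &0 &1) &2 =' addT &0 (addT &1 &2)) :
      Lor.Sentence) ∈ PAminus by rw [PAminus]; simp))
  simp only [Sentence.Realize, Formula.Realize, BoundedFormula.realize_all,
    BoundedFormula.realize_bdEqual, realize_addT] at h
  intro a b c
  have := h a b c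
  simpa only [Term.realize, Function.comp_apply, Sum.elim_inr, Fin.snoc, Fin.val_zero,
    Fin.val_one, Fin.coe_castLT, Fin.castLT, Nat.lt_irrefl, dite_true, dite_false, cast_eq,
    show ((0 : Fin 3) : ℕ) < 2 by norm_num, show ¬((2 : Fin 3) : ℕ) < 2 by norm_num,
    show ((1 : Fin 3) : ℕ) < 2 by norm_num, show ((0 : Fin 2) : ℕ) < 1 by norm_num,
    show ¬((1 : Fin 2) : ℕ) < 1 by norm_num, show ¬((0 : Fin 1) : ℕ) < 0 by norm_num,
    Nat.zero_lt_succ, Nat.one_lt_succ_succ]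
    using this

lemma PA_add_comm : ∀ a b : M, madd a b = madd b a := by
  have h := Theory.realize_sentence_of_mem (M := M) PA
    (Set.mem_union_left _ (show (∀' ∀' (addT &0 &1 =' addT &1 &0) :
      Lor.Sentence) ∈ PAminus by rw [PAminus]; simp))
  simp only [Sentence.Realize, Formula.Realize, BoundedFormula.realize_all,
    BoundedFormula.realize_bdEqual, realize_addT] at h
  intro a b
  have := h a b
  simpa only [Term.realize, Function.comp_apply, Sum.elim_inr, Fin.snoc, Fin.val_zero,
    Fin.val_one, Fin.coe_castLT, Fin.castLT, Nat.lt_irrefl, dite_true, dite_false, cast_eq,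
    show ((0 : Fin 2) : ℕ) < 1 by norm_num,
    show ¬((1 : Fin 2) : ℕ) < 1 by norm_num, show ¬((0 : Fin 1) : ℕ) < 0 by norm_num,
    Nat.zero_lt_succ, Nat.one_lt_succ_succ]
    using this

lemma PA_add_zero : ∀ a : M, madd a (mzero M) = a := by
  have h := Theory.realize_sentence_of_mem (M := M) PA
    (Set.mem_union_left _ (show (∀' (addT &0 zeroT =' &0) :
      Lor.Sentence) ∈ PAminus by rw [PAminus]; simp))
  simp only [Sentence.Realize, Formula.Realize, BoundedFormula.realize_all,
    BoundedFormula.realize_bdEqual, realize_addT, realize_zeroT] at h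
  intro a
  have := h a
  simpa only [Term.realize, Function.comp_apply, Sum.elim_inr, Fin.snoc, Fin.val_zero,
    Nat.lt_irrefl, dite_true, dite_false, cast_eq,
    show ¬((0 : Fin 1) : ℕ) < 0 by norm_num] using this

lemma evenodd_total : ∀ z : M,
    ∃ y : M, madd y y = z ∨ madd (madd y y) (mone M) = z := by
  have hax : M ⊨ indAx thetaEO :=
    Theory.realize_sentence_of_mem (M := M) PA
      (Set.mem_union_right _ ⟨0, thetaEO, rfl⟩)
  rw [indAx] at hax
  have hax' := (realize_closeAll _ default default).mp hax default
  rw [Formula.realize_imp, Formula.realize_inf, realize_substP, realize_allX,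
    realize_allX] at hax'
  simp only [Formula.realize_imp, realize_substX, realize_thetaEO, realize_zeroT,
    realize_addT, realize_oneT, xT, Term.realize_var, Sum.elim_inr, Sum.elim_inl] at hax'
  have key : ∀ x : M,
      (∃ y : M, madd y y = x ∨ madd (madd y y) (mone M) = x) →
      ∃ y : M, madd y y = madd x (mone M) ∨ madd (madd y y) (mone M) = madd x (mone M) := by
    intro x hx
    rcases hx with ⟨y, hy | hy⟩
    · exact ⟨y, Or.inr (by rw [hy])⟩
    · refine ⟨madd y (mone M), Or.inl ?_⟩
      rw [← hy]
      calc madd (madd y (mone M)) (madd y (mone M))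
          = madd y (madd (mone M) (madd y (mone M))) := PA_add_assoc M _ _ _
        _ = madd y (madd (madd y (mone M)) (mone M)) := by rw [PA_add_comm M (mone M)]
        _ = madd (madd y (madd y (mone M))) (mone M) := (PA_add_assoc M _ _ _).symm
        _ = madd (madd (madd y y) (mone M)) (mone M) := by rw [PA_add_assoc M y y]
  intro z
  have hbase : ∃ y : M, madd y y = mzero M ∨ madd (madd y y) (mone M) = mzero M :=
    ⟨mzero M, Or.inl (PA_add_zero M (mzero M))⟩
  exact hax' ⟨hbase, key⟩ z

end PAModel

end Stmt4Aux

/-- There is an `L_OR` formula `ψ(x)` such that `PA ⊢ ∀x ψ(x)`, but no inductive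
formula `φ(x)` satisfies `PA⁻ ⊢ ∀x(φ(x) → ψ(x))`. -/
theorem stmt4 :
    ∃ ψ : OneVarFormula, PA ⊨ᵇ allS ψ ∧
      ¬∃ φ : OneVarFormula, IsInductive φ ∧ PAminus ⊨ᵇ closeAll (allX (φ ⟹ ψ)) := by
  refine ⟨psiF, ?_, ?_⟩
  · intro Mo v xs
    have h : ∀ w : Fin 0 → Mo, (allX psiF).Realize w := by
      intro w
      rw [realize_allX]
      intro x
      rw [realize_psiF]
      exact evenodd_total Mo
    exact (realize_closeAll (allX psiF) v xs).mpr h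
  · rintro ⟨φ, hind, himp⟩
    haveI : M0 ⊨ PAminus := M0_models
    have h0 := hind.1.realize_sentence M0
    have h1 := himp.realize_sentence M0
    have h0' := (realize_closeAll _ default default).mp h0 default
    rw [realize_substP] at h0'
    have h1' := (realize_closeAll _ default default).mp h1 default
    rw [realize_allX] at h1'
    have h2 := h1' (mzero M0)
    rw [Formula.realize_imp] at h2
    have h3 := h2 (by rw [realize_zeroT] at h0'; exact h0')
    rw [realize_psiF] at h3
    exact not_evenodd (h3 Xel)
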